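/- Let n ≥ 1 and let M be the (n+1)×(n+1) real matrix given by the product of elementary unipotents x_{i}(x_i^k) along the standard reduced word w₀ = (s_n⋯s_1)(s_n⋯s_2)⋯(s_n) of type A_n, where in the block (s_n⋯s_j) the letter s_i (for i ≥ j) carries the Lusztig coordinate x_i^{i−j+1}. Then for all i ≥ 1, j ≥ 1 with i + j ≤ n + 1, the initial minor satisfies the product formula X_{i,i+j} = ∏_{m=1}^{j} ∏_{k=1}^{i} x_{m+k−1}^{k}. -/

import Mathlib

open Matrix
open Fin.NatCast

/-- `x_i(a) = 1 + a·E_{i,i+1}` in the (n+1)×(n+1) real matrices, with 0-based letter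
index `i : ℕ`; natural numbers are cast to `Fin (n+1)`. -/
noncomputable def xA (n : ℕ) (i : ℕ) (a : ℝ) : Matrix (Fin (n + 1)) (Fin (n + 1)) ℝ :=
  1 + Matrix.single (i : Fin (n + 1)) ((i + 1 : ℕ) : Fin (n + 1)) a

/-- The standard reduced word `w₀ = (s_n⋯s_1)(s_n⋯s_2)⋯(s_n)` of type `Aₙ`, decorated
with Lusztig coordinate labels: each entry is a pair `(i, k)` (with `i, k` 1-based)
meaning the letter `s_i` carrying the coordinate `x_i^k`; in the block `(s_n⋯s_j)`
the letter `s_i` (for `i ≥ j`) carries `x_i^{i-j+1}`, which is its `k`-th occurrence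
counted from the right. -/
def luszWord (n : ℕ) : List (ℕ × ℕ) :=
  (List.range n).flatMap fun j => (List.range (n - j)).map fun t => (n - t, n - t - j)

/-- The matrix `M`: the product of the `x_i(x_i^k)` along the standard reduced word,
where `v i k` denotes the Lusztig coordinate `x_i^k` (1-based indices). -/
noncomputable def MA (n : ℕ) (v : ℕ → ℕ → ℝ) : Matrix (Fin (n + 1)) (Fin (n + 1)) ℝ :=
  ((luszWord n).map fun p => xA n (p.1 - 1) (v p.1 p.2)).prod

/-- The initial minor `X_{a,b}`: the determinant of the square submatrix of `M` with
rows `1,…,a` and columns `b−a+1,…,b` (1-based; lower-right entry at `(a,b)`).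
For `a = 0` this is the empty determinant, which is `1`. -/
noncomputable def initialMinor (n : ℕ) (M : Matrix (Fin (n + 1)) (Fin (n + 1)) ℝ)
    (a b : ℕ) : ℝ :=
  Matrix.det (Matrix.of fun r c : Fin a =>
    M ((r : ℕ) : Fin (n + 1)) ((b - a + (c : ℕ) : ℕ) : Fin (n + 1)))

lemma val_natCast_of_le {n x : ℕ} (h : x ≤ n) : ((x : Fin (n+1)) : ℕ) = x := by
  rw [Fin.val_natCast, Nat.mod_eq_of_lt (by omega)]

lemma xA_apply (n i : ℕ) (hi : i + 1 ≤ n) (a : ℝ) (r c : Fin (n+1)) :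
    xA n i a r c = (if r = c then (1:ℝ) else 0) +
      (if (r:ℕ) = i ∧ (c:ℕ) = i + 1 then a else 0) := by
  have h1 : ((i : Fin (n+1)) : ℕ) = i := val_natCast_of_le (by omega)
  have h2 : (((i+1 : ℕ) : Fin (n+1)) : ℕ) = i + 1 := val_natCast_of_le (by omega)
  have he : ((i+1 : ℕ) : Fin (n+1)) = (i : Fin (n+1)) + 1 := by push_cast; ring
  simp only [xA, Matrix.add_apply, Matrix.one_apply, Matrix.single, Matrix.of_apply]
  congr 1
  have : ((i : Fin (n+1)) = r ∧ (i : Fin (n+1)) + 1 = c) ↔ ((r:ℕ) = i ∧ (c:ℕ) = i + 1) := by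
    rw [← he, Fin.ext_iff, Fin.ext_iff, h1, h2]
    constructor <;> (rintro ⟨h3, h4⟩; exact ⟨h3.symm, h4.symm⟩)
  simp [this]

/-- upper unitriangular -/
def UT (n : ℕ) (M : Matrix (Fin (n+1)) (Fin (n+1)) ℝ) : Prop :=
  (∀ r c : Fin (n+1), (c:ℕ) < (r:ℕ) → M r c = 0) ∧ (∀ r, M r r = 1)

lemma UT_one (n : ℕ) : UT n 1 := by
  constructor
  · intro r c h
    rw [Matrix.one_apply_ne]; rintro rfl; omega
  · intro r; simp

lemma UT_mul {n : ℕ} {M N : Matrix (Fin (n+1)) (Fin (n+1)) ℝ} (hM : UT n M) (hN : UT n N) :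
    UT n (M * N) := by
  constructor
  · intro r c h
    rw [Matrix.mul_apply]
    apply Finset.sum_eq_zero
    intro s _
    rcases lt_or_ge (s:ℕ) (r:ℕ) with hs | hs
    · rw [hM.1 r s hs, zero_mul]
    · rw [hN.1 s c (by omega), mul_zero]
  · intro r
    rw [Matrix.mul_apply]
    rw [Finset.sum_eq_single r]
    · rw [hM.2, hN.2, one_mul]
    · intro s _ hs
      rcases lt_or_ge (s:ℕ) (r:ℕ) with h | h
      · rw [hM.1 r s h, zero_mul]
      · rw [hN.1 s r (by rcases Fin.lt_or_lt_of_ne hs with h'|h' <;> omega), mul_zero]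
    · intro h; exact absurd (Finset.mem_univ r) h

lemma UT_xA {n i : ℕ} (h : i + 1 ≤ n) (a : ℝ) : UT n (xA n i a) := by
  constructor
  · intro r c hrc
    rw [xA_apply n i h a]
    rw [if_neg, if_neg, add_zero]
    · rintro ⟨h1, h2⟩; omega
    · rintro rfl; omega
  · intro r
    rw [xA_apply n i h a, if_pos rfl, if_neg (by rintro ⟨h1, h2⟩; omega), add_zero]

lemma UT_list_prod {n : ℕ} (l : List (Matrix (Fin (n+1)) (Fin (n+1)) ℝ))
    (h : ∀ M ∈ l, UT n M) : UT n l.prod := by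
  induction l with
  | nil => simpa using UT_one n
  | cons a l ih =>
      rw [List.prod_cons]
      exact UT_mul (h a (by simp)) (ih fun M hM => h M (List.mem_cons_of_mem _ hM))

lemma UT_MA (n : ℕ) (v : ℕ → ℕ → ℝ) : UT n (MA n v) := by
  apply UT_list_prod
  intro M hM
  simp only [MA, List.mem_map] at hM
  obtain ⟨p, hp, rfl⟩ := hM
  simp only [luszWord, List.mem_flatMap, List.mem_map, List.mem_range] at hp
  obtain ⟨j, hj, t, ht, rfl⟩ := hp
  exact UT_xA (by simp only; omega) _

lemma initialMinor_diag {n : ℕ} (M : Matrix (Fin (n+1)) (Fin (n+1)) ℝ) (hM : UT n M)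
    (i : ℕ) (hi : i ≤ n + 1) : initialMinor n M i i = 1 := by
  unfold initialMinor
  rw [Matrix.det_of_upperTriangular]
  · apply Finset.prod_eq_one
    intro r _
    have hr : ((((r:ℕ) : ℕ)) : Fin (n+1)) = ((i - i + (r:ℕ) : ℕ) : Fin (n+1)) := by
      congr 1; omega
    simp only [Matrix.of_apply]
    rw [← hr]
    exact hM.2 _
  · intro r c h
    simp only [Matrix.of_apply]
    apply hM.1
    have h1 : (((r:ℕ) : Fin (n+1)) : ℕ) = (r:ℕ) := val_natCast_of_le (by omega)
    have h2 : ((i - i + (c:ℕ) : ℕ) : Fin (n+1)).val = (c:ℕ) := by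
      rw [val_natCast_of_le (by omega)]; omega
    rw [h1, h2]
    exact h

/-- embed an (n+1)×(n+1) matrix into the lower-right corner of (n+2)×(n+2),
with a 1 in the top-left corner. -/
noncomputable def emb {n : ℕ} (A : Matrix (Fin (n+1)) (Fin (n+1)) ℝ) :
    Matrix (Fin (n+2)) (Fin (n+2)) ℝ :=
  Matrix.of (Fin.cons (Fin.cons 1 0) (fun r => Fin.cons 0 (A r)))

@[simp] lemma emb_zero_zero {n : ℕ} (A : Matrix (Fin (n+1)) (Fin (n+1)) ℝ) :
    emb A 0 0 = 1 := by simp [emb]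

@[simp] lemma emb_zero_succ {n : ℕ} (A : Matrix (Fin (n+1)) (Fin (n+1)) ℝ) (c : Fin (n+1)) :
    emb A 0 c.succ = 0 := by simp [emb]

@[simp] lemma emb_succ_zero {n : ℕ} (A : Matrix (Fin (n+1)) (Fin (n+1)) ℝ) (r : Fin (n+1)) :
    emb A r.succ 0 = 0 := by simp [emb]

@[simp] lemma emb_succ_succ {n : ℕ} (A : Matrix (Fin (n+1)) (Fin (n+1)) ℝ) (r c : Fin (n+1)) :
    emb A r.succ c.succ = A r c := by simp [emb]

lemma emb_one (n : ℕ) : emb (1 : Matrix (Fin (n+1)) (Fin (n+1)) ℝ) = 1 := by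
  ext r c
  refine Fin.cases ?_ (fun r => ?_) r <;> refine Fin.cases ?_ (fun c => ?_) c
  · simp
  · simp [Matrix.one_apply, (Fin.succ_ne_zero c).symm]
  · simp [Matrix.one_apply, Fin.succ_ne_zero r]
  · simp [Matrix.one_apply, Fin.succ_inj]

lemma emb_mul {n : ℕ} (A B : Matrix (Fin (n+1)) (Fin (n+1)) ℝ) :
    emb A * emb B = emb (A * B) := by
  ext r c
  rw [Matrix.mul_apply]
  rw [Fin.sum_univ_succ]
  refine Fin.cases ?_ (fun r => ?_) r <;> refine Fin.cases ?_ (fun c => ?_) c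
  · simp
  · simp
  · simp
  · simp [Matrix.mul_apply]

lemma emb_list_prod {n : ℕ} (l : List (Matrix (Fin (n+1)) (Fin (n+1)) ℝ)) :
    (l.map emb).prod = emb l.prod := by
  induction l with
  | nil => simp [emb_one]
  | cons a l ih => rw [List.map_cons, List.prod_cons, List.prod_cons, ih, emb_mul]

lemma emb_xA {n i : ℕ} (h : i + 1 ≤ n) (a : ℝ) :
    emb (xA n i a) = xA (n+1) (i+1) a := by
  ext r c
  rw [xA_apply (n+1) (i+1) (by omega)]
  refine Fin.cases ?_ (fun r => ?_) r <;> refine Fin.cases ?_ (fun c => ?_) c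
  · simp
  · simp only [emb_zero_succ, Fin.val_zero, Fin.val_succ]
    rw [if_neg (by intro h'; exact (Fin.succ_ne_zero c) h'.symm)]
    split_ifs <;> simp_all
  · simp only [emb_succ_zero, Fin.val_succ, Fin.val_zero]
    rw [if_neg (by intro h'; exact (Fin.succ_ne_zero r) h')]
    split_ifs <;> simp_all
  · rw [emb_succ_succ, xA_apply n i h]
    simp only [Fin.val_succ]
    congr 1
    · simp [Fin.succ_inj]
    · have : ((r:ℕ) = i ∧ (c:ℕ) = i + 1) ↔ ((r:ℕ) + 1 = i + 1 ∧ (c:ℕ) + 1 = i + 1 + 1) := by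
        omega
      simp only [this]

noncomputable def blk (n : ℕ) (v : ℕ → ℕ → ℝ) (j : ℕ) : Matrix (Fin (n+1)) (Fin (n+1)) ℝ :=
  ((List.range (n-j)).map fun t => xA n (n-t-1) (v (n-t) (n-t-j))).prod

lemma MA_eq (n : ℕ) (v : ℕ → ℕ → ℝ) : MA n v = ((List.range n).map (blk n v)).prod := by
  unfold MA luszWord blk
  rw [List.flatMap_def, List.map_flatten, List.prod_flatten, List.map_map, List.map_map]
  congr 1
  apply List.map_congr_left
  intro j _
  simp only [Function.comp]
  rw [List.map_map]
  rfl

lemma blk_succ (m : ℕ) (v : ℕ → ℕ → ℝ) (j : ℕ) (hj : j < m) :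
    blk (m+1) v (j+1) = emb (blk m (fun i k => v (i+1) k) j) := by
  unfold blk
  rw [← emb_list_prod, List.map_map]
  have : m + 1 - (j+1) = m - j := by omega
  rw [this]
  congr 1
  apply List.map_congr_left
  intro t ht
  rw [List.mem_range] at ht
  simp only [Function.comp_apply]
  rw [emb_xA (by omega)]
  have h1 : m - t - 1 + 1 = m + 1 - t - 1 := by omega
  have h2 : m - t + 1 = m + 1 - t := by omega
  have h3 : m - t - j = m + 1 - t - (j + 1) := by omega
  rw [h1, h2, h3]

lemma MA_succ (m : ℕ) (v : ℕ → ℕ → ℝ) :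
    MA (m+1) v = blk (m+1) v 0 * emb (MA m (fun i k => v (i+1) k)) := by
  rw [MA_eq (m+1) v, List.range_succ_eq_map, List.map_cons, List.prod_cons]
  congr 1
  rw [List.map_map, MA_eq, ← emb_list_prod, List.map_map]
  congr 1
  apply List.map_congr_left
  intro j hj
  rw [List.mem_range] at hj
  exact blk_succ m v j hj

lemma blk0_partial (m : ℕ) (a : ℕ → ℝ) : ∀ b, b ≤ m+1 →
    ((List.range b).map fun t => xA (m+1) (m-t) (a (m-t))).prod
      = 1 + ∑ t ∈ Finset.range b,
          Matrix.single ((m-t : ℕ) : Fin (m+2)) ((m-t+1 : ℕ) : Fin (m+2)) (a (m-t)) := by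
  intro b
  induction b with
  | zero => simp
  | succ b ih =>
      intro hb
      rw [List.range_succ, List.map_append, List.prod_append, ih (by omega)]
      simp only [List.map_cons, List.map_nil, List.prod_cons, List.prod_nil, mul_one]
      have hx : xA (m+1) (m-b) (a (m-b)) =
          1 + Matrix.single ((m-b : ℕ) : Fin (m+2)) ((m-b+1 : ℕ) : Fin (m+2)) (a (m-b)) := by
        rfl
      rw [hx, mul_add, mul_one, add_mul, one_mul]
      have hz : (∑ t ∈ Finset.range b,
          Matrix.single ((m-t : ℕ) : Fin (m+2)) ((m-t+1 : ℕ) : Fin (m+2)) (a (m-t))) *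
          Matrix.single ((m-b : ℕ) : Fin (m+2)) ((m-b+1 : ℕ) : Fin (m+2)) (a (m-b)) = 0 := by
        rw [Finset.sum_mul]
        apply Finset.sum_eq_zero
        intro t ht
        rw [Finset.mem_range] at ht
        apply Matrix.single_mul_single_of_ne
        intro hcon
        rw [Fin.ext_iff, val_natCast_of_le (by omega), val_natCast_of_le (by omega)] at hcon
        omega
      rw [hz, add_zero]
      rw [Finset.sum_range_succ]
      abel

lemma blk0_apply (m : ℕ) (v : ℕ → ℕ → ℝ) (r c : Fin (m+2)) (hr : (r:ℕ) ≤ m) :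
    blk (m+1) v 0 r c = (if r = c then (1:ℝ) else 0) +
      (if (c:ℕ) = (r:ℕ)+1 then v ((r:ℕ)+1) ((r:ℕ)+1) else 0) := by
  have heq : blk (m+1) v 0 =
      ((List.range (m+1)).map fun t => xA (m+1) (m-t) (v (m-t+1) (m-t+1))).prod := by
    unfold blk
    congr 1
    apply List.map_congr_left
    intro t ht
    rw [List.mem_range] at ht
    have h1 : m + 1 - t - 1 = m - t := by omega
    have h2 : m + 1 - t = m - t + 1 := by omega
    have h3 : m + 1 - t - 0 = m - t + 1 := by omega
    rw [h1, h3, h2]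
  rw [heq, blk0_partial m (fun i => v (i+1) (i+1)) (m+1) le_rfl]
  rw [Matrix.add_apply, Matrix.one_apply, Matrix.sum_apply]
  congr 1
  rw [Finset.sum_eq_single (m - (r:ℕ))]
  · have h1 : m - (m - (r:ℕ)) = (r:ℕ) := by omega
    rw [h1]
    simp only [Matrix.single, Matrix.of_apply]
    have h2 : (((r:ℕ) : ℕ) : Fin (m+2)) = r := by
      apply Fin.ext; rw [val_natCast_of_le (by omega)]
    rw [h2]
    have h4 : ((r + 1 : Fin (m+2)) = c) ↔ ((c:ℕ) = (r:ℕ)+1) := by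
      rw [Fin.ext_iff, Fin.val_add_one_of_lt (by rw [Fin.lt_def]; simp; omega)]
      exact eq_comm
    simp [h4]
  · intro t ht hne
    rw [Finset.mem_range] at ht
    simp only [Matrix.single, Matrix.of_apply]
    rw [if_neg]
    rintro ⟨h1, h2⟩
    rw [Fin.ext_iff, val_natCast_of_le (by omega)] at h1
    omega
  · intro hcon
    exact absurd (Finset.mem_range.mpr (by omega)) hcon

lemma natCast_succ_fin (m x : ℕ) (hx : x ≤ m) :
    ((x+1 : ℕ) : Fin (m+2)) = Fin.succ ((x : ℕ) : Fin (m+1)) := by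
  apply Fin.ext
  rw [val_natCast_of_le (by omega), Fin.val_succ, val_natCast_of_le (by omega)]

lemma step_lhs (m j : ℕ) (v : ℕ → ℕ → ℝ) (i : ℕ) (hij : i + j + 1 ≤ m + 2)
    (r c : Fin i) :
    MA (m+1) v (((r:ℕ) : ℕ) : Fin (m+2)) ((j+1+(c:ℕ) : ℕ) : Fin (m+2)) =
      (if (r:ℕ) = 0 then 0 else
        MA m (fun i k => v (i+1) k) (((r:ℕ)-1 : ℕ) : Fin (m+1)) ((j+(c:ℕ) : ℕ) : Fin (m+1))) +
      v ((r:ℕ)+1) ((r:ℕ)+1) *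
        MA m (fun i k => v (i+1) k) (((r:ℕ) : ℕ) : Fin (m+1)) ((j+(c:ℕ) : ℕ) : Fin (m+1)) := by
  have hr : (r:ℕ) < i := r.isLt
  have hc : (c:ℕ) < i := c.isLt
  set B := emb (MA m (fun i k => v (i+1) k)) with hB
  set R : Fin (m+2) := (((r:ℕ) : ℕ) : Fin (m+2)) with hRdef
  have hRval : (R:ℕ) = (r:ℕ) := val_natCast_of_le (by omega)
  have hcol : ((j+1+(c:ℕ) : ℕ) : Fin (m+2)) = Fin.succ ((j+(c:ℕ) : ℕ) : Fin (m+1)) := by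
    have : j+1+(c:ℕ) = (j+(c:ℕ))+1 := by omega
    rw [this, natCast_succ_fin m _ (by omega)]
  rw [MA_succ, Matrix.mul_apply]
  have hterm : ∀ s : Fin (m+2), blk (m+1) v 0 R s * B s ((j+1+(c:ℕ) : ℕ) : Fin (m+2)) =
      (if R = s then B s ((j+1+(c:ℕ) : ℕ) : Fin (m+2)) else 0) +
      (if (((r:ℕ)+1 : ℕ) : Fin (m+2)) = s then
        v ((r:ℕ)+1) ((r:ℕ)+1) * B s ((j+1+(c:ℕ) : ℕ) : Fin (m+2)) else 0) := by
    intro s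
    rw [blk0_apply m v R s (by omega), hRval, add_mul]
    congr 1
    · split_ifs <;> simp
    · have hcond : ((s:ℕ) = (r:ℕ)+1) ↔ ((((r:ℕ)+1 : ℕ) : Fin (m+2)) = s) := by
        rw [Fin.ext_iff, val_natCast_of_le (by omega)]
        exact comm
      split_ifs with h1 h2 h2
      · ring
      · exact absurd (hcond.mp h1) h2
      · exact absurd (hcond.mpr h2) h1
      · exact zero_mul _
  rw [Finset.sum_congr rfl (fun s _ => hterm s), Finset.sum_add_distrib,
    Finset.sum_ite_eq, Finset.sum_ite_eq]
  simp only [Finset.mem_univ, if_true]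
  congr 1
  · -- B R col
    rcases Nat.eq_zero_or_pos (r:ℕ) with h0 | h0
    · rw [if_pos h0, hRdef, h0]
      have : ((0 : ℕ) : Fin (m+2)) = (0 : Fin (m+2)) := by simp
      rw [this, hcol, hB, emb_zero_succ]
    · rw [if_neg (by omega)]
      have : (((r:ℕ) : ℕ) : Fin (m+2)) = Fin.succ ((((r:ℕ)-1 : ℕ) : ℕ) : Fin (m+1)) := by
        apply Fin.ext
        rw [val_natCast_of_le (by omega), Fin.val_succ, val_natCast_of_le (by omega)]
        omega
      rw [hRdef, this, hcol, hB, emb_succ_succ]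
  · -- a * B (r+1) col
    congr 1
    rw [natCast_succ_fin m _ (by omega), hcol, hB, emb_succ_succ]

lemma step_rhs (m j : ℕ) (v : ℕ → ℕ → ℝ) (i : ℕ) (r c : Fin i) :
    ∑ u : Fin i, ((if u = r then v ((r:ℕ)+1) ((r:ℕ)+1) else 0) +
        (if (u:ℕ)+1 = (r:ℕ) then 1 else 0)) *
      MA m (fun i k => v (i+1) k) (((u:ℕ) : ℕ) : Fin (m+1)) ((j+(c:ℕ) : ℕ) : Fin (m+1)) =
      (if (r:ℕ) = 0 then 0 else
        MA m (fun i k => v (i+1) k) (((r:ℕ)-1 : ℕ) : Fin (m+1)) ((j+(c:ℕ) : ℕ) : Fin (m+1))) +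
      v ((r:ℕ)+1) ((r:ℕ)+1) *
        MA m (fun i k => v (i+1) k) (((r:ℕ) : ℕ) : Fin (m+1)) ((j+(c:ℕ) : ℕ) : Fin (m+1)) := by
  simp only [add_mul, Finset.sum_add_distrib, ite_mul, zero_mul, one_mul]
  rw [add_comm]
  congr 1
  · rcases Nat.eq_zero_or_pos (r:ℕ) with h0 | h0
    · rw [if_pos h0]
      apply Finset.sum_eq_zero
      intro u _
      rw [if_neg (by omega)]
    · rw [if_neg (by omega)]
      have hri : (r:ℕ) - 1 < i := by have := r.isLt; omega
      rw [Finset.sum_eq_single (⟨(r:ℕ)-1, hri⟩ : Fin i)]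
      · rw [if_pos (by simp; omega)]
      · intro u _ hu
        rw [if_neg]
        intro hcon
        apply hu
        apply Fin.ext
        simp only
        omega
      · intro hcon
        exact absurd (Finset.mem_univ _) hcon
  · rw [Finset.sum_ite_eq' Finset.univ r]
    simp

lemma Icc_one_prod (N : ℕ) (f : ℕ → ℝ) :
    ∏ k ∈ Finset.Icc 1 N, f k = ∏ t ∈ Finset.range N, f (t+1) := by
  induction N with
  | zero => simp
  | succ N ihN =>
      rw [Finset.prod_Icc_succ_top (by omega), Finset.prod_range_succ, ihN]

lemma det_T (i : ℕ) (d : ℕ → ℝ) :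
    (Matrix.of fun r u : Fin i =>
      (if u = r then d (r:ℕ) else 0) + (if (u:ℕ)+1 = (r:ℕ) then (1:ℝ) else 0)).det
      = ∏ r : Fin i, d (r:ℕ) := by
  rw [Matrix.det_of_lowerTriangular]
  · apply Finset.prod_congr rfl
    intro r _
    simp only [Matrix.of_apply]
    rw [if_pos trivial, if_neg (by omega), add_zero]
  · intro r u h
    have hru : r < u := h
    simp only [Matrix.of_apply]
    rw [if_neg (by intro hc; subst hc; exact lt_irrefl _ hru), if_neg (by
      have := Fin.lt_def.mp hru; omega), add_zero]

lemma aux_formula (j : ℕ) : ∀ (n : ℕ) (v : ℕ → ℕ → ℝ) (i : ℕ), i + j ≤ n + 1 →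
    initialMinor n (MA n v) i (i+j) =
      ∏ m ∈ Finset.Icc 1 j, ∏ k ∈ Finset.Icc 1 i, v (m+k-1) k := by
  induction j with
  | zero =>
      intro n v i h
      have : initialMinor n (MA n v) i (i+0) = 1 := by
        rw [Nat.add_zero]
        exact initialMinor_diag (MA n v) (UT_MA n v) i h
      rw [this]
      simp
  | succ j ih =>
      intro n v i hij
      rcases Nat.eq_zero_or_pos i with rfl | hi
      · unfold initialMinor
        rw [Matrix.det_isEmpty]
        symm
        apply Finset.prod_eq_one
        intro m _
        rw [show Finset.Icc 1 0 = (∅ : Finset ℕ) from Finset.Icc_eq_empty (by omega)]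
        exact Finset.prod_empty
      · obtain ⟨m, rfl⟩ : ∃ m, n = m + 1 := ⟨n - 1, by omega⟩
        set v' : ℕ → ℕ → ℝ := fun a k => v (a+1) k with hv'
        have key : (Matrix.of fun r c : Fin i =>
            MA (m+1) v (((r:ℕ):ℕ) : Fin (m+2)) ((i+(j+1) - i + (c:ℕ) : ℕ) : Fin (m+2))) =
          (Matrix.of fun r u : Fin i =>
            (if u = r then v ((r:ℕ)+1) ((r:ℕ)+1) else 0) +
            (if (u:ℕ)+1 = (r:ℕ) then (1:ℝ) else 0)) *
          (Matrix.of fun u c : Fin i =>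
            MA m v' (((u:ℕ):ℕ) : Fin (m+1)) ((j + (c:ℕ) : ℕ) : Fin (m+1))) := by
          ext r c
          rw [Matrix.mul_apply]
          simp only [Matrix.of_apply]
          have hidx : i + (j+1) - i + (c:ℕ) = j + 1 + (c:ℕ) := by omega
          rw [hidx, step_lhs m j v i (by omega) r c, ← step_rhs m j v i r c]
        unfold initialMinor
        rw [key, Matrix.det_mul]
        have hdT : (Matrix.of fun r u : Fin i =>
            (if u = r then v ((r:ℕ)+1) ((r:ℕ)+1) else 0) +
            (if (u:ℕ)+1 = (r:ℕ) then (1:ℝ) else 0)).det =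
            ∏ r : Fin i, v ((r:ℕ)+1) ((r:ℕ)+1) := det_T i (fun t => v (t+1) (t+1))
        rw [hdT]
        have hdet2 : (Matrix.of fun u c : Fin i =>
            MA m v' (((u:ℕ):ℕ) : Fin (m+1)) ((j + (c:ℕ) : ℕ) : Fin (m+1))).det =
            initialMinor m (MA m v') i (i+j) := by
          unfold initialMinor
          congr 1
          ext u c
          simp only [Matrix.of_apply]
          congr 2
          omega
        rw [hdet2, ih m v' i (by omega)]
        -- final product algebra
        have hL : (∏ r : Fin i, v ((r:ℕ)+1) ((r:ℕ)+1)) = ∏ k ∈ Finset.Icc 1 i, v k k := by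
          rw [Fin.prod_univ_eq_prod_range (fun t => v (t+1) (t+1)) i, Icc_one_prod]
        rw [hL, Icc_one_prod (j+1) (fun m' => ∏ k ∈ Finset.Icc 1 i, v (m'+k-1) k),
          Finset.prod_range_succ' (fun t => ∏ k ∈ Finset.Icc 1 i, v (t+1+k-1) k) j,
          Icc_one_prod j (fun m' => ∏ k ∈ Finset.Icc 1 i, v' (m'+k-1) k), mul_comm]
        congr 1
        · apply Finset.prod_congr rfl
          intro t _
          apply Finset.prod_congr rfl
          intro k hk
          rw [hv']
          simp only
          congr 1
          omega
        · apply Finset.prod_congr rfl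
          intro k hk
          congr 1
          omega

/-- The second formula of Proposition 7.1 of the paper:
`X_{i,i+j} = ∏_{m=1}^{j} ∏_{k=1}^{i} x_{m+k−1}^{k}`. -/
theorem initial_minor_product_formula (n : ℕ) (hn : 1 ≤ n) (v : ℕ → ℕ → ℝ)
    (i j : ℕ) (hi : 1 ≤ i) (hj : 1 ≤ j) (hij : i + j ≤ n + 1) :
    initialMinor n (MA n v) i (i + j) =
      ∏ m ∈ Finset.Icc 1 j, ∏ k ∈ Finset.Icc 1 i, v (m + k - 1) k := by
  exact aux_formula j n v i hij
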